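/- Let a and b be symmetric bilinear forms on a real vector space E and let V ⊆ E be a linear subspace. Let λ, λ_h ∈ ℝ with λ ≠ 0, let u, ũ ∈ V and w ∈ E be such that a(u,v) = λ·b(u,v) for all v ∈ V, a(ũ,v) = λ_h·b(w,v) for all v ∈ V, and b(w,u) ≠ 0. Then λ_h − λ = λ·b(ũ − w, u) / b(w,u). -/

import Mathlib

/-- Eigenvalue-difference identity (equation (3.16)): if `u` is an exact eigenfunction
with eigenvalue `lam`, `w` a discrete eigenfunction with discrete eigenvalue `lamh`, and
`ut` solves the continuous problem with right-hand side `lamh * b w ·`, then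
`lamh - lam = lam * b (ut - w) u / b w u`. -/
theorem eigenvalue_difference_identity
    {E : Type*} [AddCommGroup E] [Module ℝ E]
    (a b : E →ₗ[ℝ] E →ₗ[ℝ] ℝ)
    (ha : ∀ x y, a x y = a y x) (hb : ∀ x y, b x y = b y x)
    (V : Submodule ℝ E) (lam lamh : ℝ) (hlam : lam ≠ 0)
    (u ut : E) (hu : u ∈ V) (hut : ut ∈ V) (w : E)
    (heig : ∀ v ∈ V, a u v = lam * b u v)
    (htilde : ∀ v ∈ V, a ut v = lamh * b w v)
    (hwu : b w u ≠ 0) :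
    lamh - lam = lam * b (ut - w) u / b w u := by
  have key : lamh * b w u = lam * b ut u := by
    have h1 := htilde u hu
    have h2 := heig ut hut
    rw [← h1, ha, h2, hb u ut]
  have hsub : b (ut - w) u = b ut u - b w u := by simp
  field_simp
  rw [hsub]
  linarith [key]
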